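/- For u = 6 + 3√7, the norm N(u) = 6² - 9·7 = -27 is a perfect cube, and u is not a cube in the ring of integers of ℚ(√7). -/
import Mathlib


/-- For `u = 6 + 3√7 ∈ ℤ[√7]` (the ring of integers of `ℚ(√7)`), the norm
`N(u) = 6² - 9·7 = -27` is a perfect cube, and `u` is not a cube in `ℤ[√7]`. -/
theorem stmt_8 :
    Zsqrtd.norm (⟨6, 3⟩ : ℤ√7) = (-3) ^ 3 ∧
      ¬ ∃ v : ℤ√7, v ^ 3 = (⟨6, 3⟩ : ℤ√7) := by
  constructor
  · simp [Zsqrtd.norm]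
  · rintro ⟨v, hv⟩
    have him : (v ^ 3).im = 3 := by rw [hv]
    set a := v.re
    set b := v.im
    have h : b * (3 * a ^ 2 + 7 * b ^ 2) = 3 := by
      have : (v ^ 3).im = 3 * a ^ 2 * b + 7 * b ^ 3 := by
        simp [pow_succ, Zsqrtd.im_mul, Zsqrtd.re_mul]; ring
      rw [this] at him; linarith [him]
    have hb : b ∣ 3 := ⟨_, h.symm⟩
    have h3 : (3 : ℤ) ≠ 0 := by norm_num
    have hble := Int.le_of_dvd (by norm_num) hb
    have hbge : -3 ≤ b := by
      have := Int.natAbs_dvd_natAbs.mpr hb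
      have := Nat.le_of_dvd (by norm_num) this
      omega
    interval_cases b <;> nlinarith [sq_nonneg a]
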